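/- Let v ∈ ℕ^N with v[i] = v[i+1], and let σ_v be the minimal-length permutation with v = v⁺σ_v. Then σ_v s_i = s_{σ_v[i]} σ_v, where s_i acts on the right (positions) and s_{σ_v[i]} acts on the left (values). -/

import Mathlib

/-- `σ` is an adjacent transposition `s_i = (i, i+1)`. -/
def IsAdjTrans {N : ℕ} (σ : Equiv.Perm (Fin N)) : Prop :=
  ∃ i j : Fin N, (j : ℕ) = (i : ℕ) + 1 ∧ σ = Equiv.swap i j

/-- The length of a permutation: the minimal number of adjacent transpositions
needed to write it. -/
noncomputable def permLength {N : ℕ} (σ : Equiv.Perm (Fin N)) : ℕ :=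
  sInf {k | ∃ l : List (Equiv.Perm (Fin N)),
    l.length = k ∧ (∀ τ ∈ l, IsAdjTrans τ) ∧ l.prod = σ}

/-- `σ` is the (unique) minimal-length permutation with `v = w ∘ σ`, where `w`
is weakly decreasing, i.e. `w = v⁺` and `σ = σ_v`. -/
def IsMinDecomp {N : ℕ} (v w : Fin N → ℕ) (σ : Equiv.Perm (Fin N)) : Prop :=
  (∀ i j : Fin N, i ≤ j → w j ≤ w i) ∧ (v = fun k => w (σ k)) ∧
  ∀ σ' : Equiv.Perm (Fin N), (v = fun k => w (σ' k)) →
    permLength σ ≤ permLength σ'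

section Aux

open Equiv Finset

variable {N : ℕ}

/-- The set of inversions of a permutation of `Fin N`. -/
def invSet (σ : Equiv.Perm (Fin N)) : Finset (Fin N × Fin N) :=
  Finset.univ.filter (fun p => p.1 < p.2 ∧ σ p.2 < σ p.1)

/-- The number of inversions. -/
def invNum (σ : Equiv.Perm (Fin N)) : ℕ := (invSet σ).card

lemma invNum_one : invNum (1 : Equiv.Perm (Fin N)) = 0 := by
  rw [invNum, Finset.card_eq_zero]
  ext ⟨a, b⟩
  simp only [invSet, Finset.mem_filter, Finset.mem_univ, true_and, Finset.notMem_empty,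
    iff_false, not_and]
  simp only [Equiv.Perm.one_apply]
  intro h
  exact not_lt.mpr h.le

lemma swap_lt_swap_iff {c k x y : Fin N} (hk : (k : ℕ) = (c : ℕ) + 1) :
    Equiv.swap c k y < Equiv.swap c k x ↔
      (x = c ∧ y = k) ∨ (y < x ∧ ¬(x = k ∧ y = c)) := by
  rw [Equiv.swap_apply_def, Equiv.swap_apply_def]
  split_ifs <;>
    (simp only [Fin.lt_def, Fin.ext_iff] at *) <;> omega

lemma invSet_swap_mul (c k : Fin N) (hk : (k : ℕ) = (c : ℕ) + 1)
    (σ : Equiv.Perm (Fin N)) (h : σ⁻¹ c < σ⁻¹ k) :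
    invSet (Equiv.swap c k * σ) = insert (σ⁻¹ c, σ⁻¹ k) (invSet σ) := by
  ext ⟨a, b⟩
  simp only [invSet, Finset.mem_filter, Finset.mem_univ, true_and, Finset.mem_insert,
    Prod.mk.injEq]
  simp only [Equiv.Perm.mul_apply]
  rw [swap_lt_swap_iff hk]
  constructor
  · rintro ⟨hab, (⟨hac, hbk⟩ | ⟨hlt, -⟩)⟩
    · left
      constructor
      · rw [Equiv.Perm.eq_inv_iff_eq]; exact hac
      · rw [Equiv.Perm.eq_inv_iff_eq]; exact hbk
    · right; exact ⟨hab, hlt⟩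
  · rintro (⟨ha, hb⟩ | ⟨hab, hlt⟩)
    · subst ha; subst hb
      refine ⟨h, Or.inl ⟨?_, ?_⟩⟩ <;> simp
    · refine ⟨hab, Or.inr ⟨hlt, ?_⟩⟩
      rintro ⟨hak, hbc⟩
      have ha : a = σ⁻¹ k := by rw [Equiv.Perm.eq_inv_iff_eq]; exact hak
      have hb : b = σ⁻¹ c := by rw [Equiv.Perm.eq_inv_iff_eq]; exact hbc
      rw [ha, hb] at hab
      exact absurd (hab.trans h) (lt_irrefl _)

lemma invNum_swap_mul_of_lt (c k : Fin N) (hk : (k : ℕ) = (c : ℕ) + 1)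
    (σ : Equiv.Perm (Fin N)) (h : σ⁻¹ c < σ⁻¹ k) :
    invNum (Equiv.swap c k * σ) = invNum σ + 1 := by
  have hnot : (σ⁻¹ c, σ⁻¹ k) ∉ invSet σ := by
    simp only [invSet, Finset.mem_filter, Finset.mem_univ, true_and, not_and]
    intro _
    simp only [Equiv.Perm.coe_inv, Equiv.apply_symm_apply]
    intro hlt
    rw [Fin.lt_def] at hlt; omega
  rw [invNum, invNum, invSet_swap_mul c k hk σ h, Finset.card_insert_of_notMem hnot]

lemma invNum_swap_mul_of_gt (c k : Fin N) (hk : (k : ℕ) = (c : ℕ) + 1)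
    (σ : Equiv.Perm (Fin N)) (h : σ⁻¹ k < σ⁻¹ c) :
    invNum σ = invNum (Equiv.swap c k * σ) + 1 := by
  have hck : c ≠ k := by intro hc; rw [hc] at hk; omega
  set σ' := Equiv.swap c k * σ with hσ'
  have h1 : Equiv.swap c k * σ' = σ := by
    rw [hσ', ← mul_assoc, Equiv.swap_mul_self, one_mul]
  have h2 : σ'⁻¹ c = σ⁻¹ k := by
    rw [hσ', mul_inv_rev, Equiv.Perm.mul_apply]
    congr 1
    rw [Equiv.swap_inv, Equiv.swap_apply_left]
  have h3 : σ'⁻¹ k = σ⁻¹ c := by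
    rw [hσ', mul_inv_rev, Equiv.Perm.mul_apply]
    congr 1
    rw [Equiv.swap_inv, Equiv.swap_apply_right]
  have := invNum_swap_mul_of_lt c k hk σ' (by rw [h2, h3]; exact h)
  rw [h1] at this
  exact this

lemma invNum_inv (σ : Equiv.Perm (Fin N)) : invNum σ⁻¹ = invNum σ := by
  unfold invNum
  apply Finset.card_bij (fun p _ => (σ⁻¹ p.2, σ⁻¹ p.1))
  · rintro ⟨a, b⟩ hp
    simp only [invSet, Finset.mem_filter, Finset.mem_univ, true_and] at hp ⊢
    simp only [Equiv.Perm.coe_inv, Equiv.apply_symm_apply]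
    exact ⟨hp.2, hp.1⟩
  · rintro ⟨a, b⟩ ha ⟨a', b'⟩ hb hEq
    simp only [Prod.mk.injEq] at hEq ⊢
    obtain ⟨h1, h2⟩ := hEq
    exact ⟨σ⁻¹.injective h2, σ⁻¹.injective h1⟩
  · rintro ⟨a, b⟩ hp
    refine ⟨(σ b, σ a), ?_, ?_⟩
    · simp only [invSet, Finset.mem_filter, Finset.mem_univ, true_and] at hp ⊢
      simp only [Equiv.Perm.coe_inv, Equiv.symm_apply_apply]
      exact ⟨hp.2, hp.1⟩
    · simp

lemma invNum_mul_swap_of_gt (a b : Fin N) (hb : (b : ℕ) = (a : ℕ) + 1)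
    (σ : Equiv.Perm (Fin N)) (h : σ b < σ a) :
    invNum σ = invNum (σ * Equiv.swap a b) + 1 := by
  have h1 : (σ * Equiv.swap a b)⁻¹ = Equiv.swap a b * σ⁻¹ := by
    rw [mul_inv_rev, Equiv.swap_inv]
  have h2 := invNum_swap_mul_of_gt a b hb σ⁻¹ (by
    simp only [inv_inv]
    exact h)
  rw [← h1] at h2
  rw [← invNum_inv σ, h2, invNum_inv]

lemma invNum_mul_swap_of_lt (a b : Fin N) (hb : (b : ℕ) = (a : ℕ) + 1)
    (σ : Equiv.Perm (Fin N)) (h : σ a < σ b) :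
    invNum (σ * Equiv.swap a b) = invNum σ + 1 := by
  have h1 : (σ * Equiv.swap a b)⁻¹ = Equiv.swap a b * σ⁻¹ := by
    rw [mul_inv_rev, Equiv.swap_inv]
  have h2 := invNum_swap_mul_of_lt a b hb σ⁻¹ (by
    simp only [inv_inv]
    exact h)
  rw [← h1] at h2
  rw [← invNum_inv σ, ← h2, invNum_inv]

/-- A permutation of `Fin N` with no descent is the identity. -/
lemma eq_one_of_no_descent (σ : Equiv.Perm (Fin N))
    (h : ∀ a b : Fin N, (b : ℕ) = (a : ℕ) + 1 → σ a < σ b) : σ = 1 := by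
  have hmono : StrictMono σ := by
    have step : ∀ d : ℕ, ∀ a b : Fin N, (b : ℕ) = (a : ℕ) + d + 1 → σ a < σ b := by
      intro d
      induction d with
      | zero => intro a b hab; exact h a b (by omega)
      | succ d ih =>
        intro a b hab
        have hmid : ((a : ℕ) + d + 1) < N := by
          have := b.isLt; omega
        set m : Fin N := ⟨(a : ℕ) + d + 1, hmid⟩
        exact lt_trans (ih a m rfl) (h m b (by simp [m]; omega))
    intro a b hab
    rw [Fin.lt_def] at hab
    obtain ⟨d, hd⟩ := Nat.exists_eq_add_of_lt hab
    exact step d a b (by omega)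
  have hrange : Set.range σ = Set.range (id : Fin N → Fin N) := by
    simp [σ.surjective.range_eq]
  haveI : WellFoundedLT (Fin N) := inferInstance
  have hfn : ⇑σ = id := (hmono.range_inj strictMono_id).1 hrange
  ext x
  simp [hfn]

/-- Any word of adjacent transpositions with product `σ` has length at least `invNum σ`. -/
lemma invNum_le_length (l : List (Equiv.Perm (Fin N))) (hl : ∀ τ ∈ l, IsAdjTrans τ) :
    invNum l.prod ≤ l.length := by
  induction l with
  | nil => simp [invNum_one]
  | cons t rest ih =>
    have ht := hl t List.mem_cons_self
    obtain ⟨c, k, hk, rfl⟩ := ht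
    have hrest := ih (fun τ hτ => hl τ (List.mem_cons_of_mem _ hτ))
    rw [List.prod_cons]
    set σ := rest.prod
    have hck : σ⁻¹ c ≠ σ⁻¹ k := by
      intro hc
      have : c = k := σ⁻¹.injective hc
      rw [this] at hk; omega
    rcases lt_or_gt_of_ne hck with hlt | hgt
    · rw [invNum_swap_mul_of_lt c k hk σ hlt]
      simpa using Nat.add_le_add_right hrest 1
    · have := invNum_swap_mul_of_gt c k hk σ hgt
      simp only [List.length_cons]
      omega

/-- There is a word of adjacent transpositions of length `invNum σ` with product `σ`. -/
lemma exists_word (σ : Equiv.Perm (Fin N)) :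
    ∃ l : List (Equiv.Perm (Fin N)), l.length = invNum σ ∧
      (∀ τ ∈ l, IsAdjTrans τ) ∧ l.prod = σ := by
  generalize hn : invNum σ = n
  induction n generalizing σ with
  | zero =>
    have : σ = 1 := by
      apply eq_one_of_no_descent
      intro a b hab
      by_contra hcon
      have hne : σ a ≠ σ b := fun hc => by
        have : a = b := σ.injective hc
        rw [this] at hab; omega
      have hgt : σ b < σ a := lt_of_le_of_ne (not_lt.mp hcon) (Ne.symm hne)
      have := invNum_mul_swap_of_gt a b hab σ hgt
      omega
    exact ⟨[], by simp [this]⟩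
  | succ n ih =>
    have hne : σ ≠ 1 := by
      intro hc
      rw [hc] at hn
      have := invNum_one (N := N)
      omega
    have hdesc : ∃ a b : Fin N, (b : ℕ) = (a : ℕ) + 1 ∧ σ b < σ a := by
      by_contra hcon
      push_neg at hcon
      apply hne
      apply eq_one_of_no_descent
      intro a b hab
      have hne2 : σ a ≠ σ b := fun hc => by
        have : a = b := σ.injective hc
        rw [this] at hab; omega
      exact lt_of_le_of_ne (hcon a b hab) hne2
    obtain ⟨a, b, hab, hgt⟩ := hdesc
    have hstep := invNum_mul_swap_of_gt a b hab σ hgt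
    have hinv' : invNum (σ * Equiv.swap a b) = n := by omega
    obtain ⟨l, hlen, hadj, hprod⟩ := ih _ hinv'
    refine ⟨l ++ [Equiv.swap a b], ?_, ?_, ?_⟩
    · simp [hlen]
    · intro τ hτ
      rcases List.mem_append.mp hτ with h | h
      · exact hadj τ h
      · simp at h
        exact ⟨a, b, hab, h⟩
    · rw [List.prod_append, hprod]
      simp [mul_assoc]

lemma permLength_eq_invNum (σ : Equiv.Perm (Fin N)) : permLength σ = invNum σ := by
  obtain ⟨l, hlen, hadj, hprod⟩ := exists_word σ
  have hmem : invNum σ ∈ {k | ∃ l : List (Equiv.Perm (Fin N)),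
      l.length = k ∧ (∀ τ ∈ l, IsAdjTrans τ) ∧ l.prod = σ} := ⟨l, hlen, hadj, hprod⟩
  apply le_antisymm
  · exact Nat.sInf_le hmem
  · have hne : {k | ∃ l : List (Equiv.Perm (Fin N)),
        l.length = k ∧ (∀ τ ∈ l, IsAdjTrans τ) ∧ l.prod = σ}.Nonempty := ⟨_, hmem⟩
    obtain ⟨l', hlen', hadj', hprod'⟩ := Nat.sInf_mem hne
    calc invNum σ = invNum l'.prod := by rw [hprod']
    _ ≤ l'.length := invNum_le_length l' hadj'
    _ = _ := hlen'

/-- In a minimal decomposition, for positions `p < q` with equal `w`-values, `σ p < σ q`. -/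
lemma min_no_descent_on_equal {v w : Fin N → ℕ} {σ : Equiv.Perm (Fin N)}
    (hσ : IsMinDecomp v w σ) (p q : Fin N) (hpq : p < q)
    (hw : w (σ p) = w (σ q)) : σ p < σ q := by
  obtain ⟨hdec, hv, hmin⟩ := hσ
  by_contra hcon
  have hne : σ p ≠ σ q := fun hc => by
    have : p = q := σ.injective hc
    rw [this] at hpq; exact lt_irrefl _ hpq
  have hgt : σ q < σ p := lt_of_le_of_ne (not_lt.mp hcon) (Ne.symm hne)
  -- find an adjacent descent in values between σ q and σ p
  set B := σ q
  set A := σ p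
  have hBA : B < A := hgt
  have hposAB : σ⁻¹ A < σ⁻¹ B := by
    simp only [A, B, Equiv.Perm.coe_inv, Equiv.symm_apply_apply]
    exact hpq
  have hchain : ∃ c k : Fin N, (k : ℕ) = (c : ℕ) + 1 ∧ B ≤ c ∧ k ≤ A ∧ σ⁻¹ k < σ⁻¹ c := by
    by_contra hcon2
    push_neg at hcon2
    have key : ∀ d : ℕ, (B : ℕ) + d ≤ (A : ℕ) →
        ∀ hlt : (B : ℕ) + d < N, σ⁻¹ B ≤ σ⁻¹ ⟨(B : ℕ) + d, hlt⟩ := by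
      intro d
      induction d with
      | zero =>
        intro _ hlt
        have : (⟨(B : ℕ) + 0, hlt⟩ : Fin N) = B := by ext; simp
        rw [this]
      | succ d ih =>
        intro hd hlt
        have hd' : (B : ℕ) + d ≤ (A : ℕ) := by omega
        have hlt' : (B : ℕ) + d < N := by omega
        have h1 := ih hd' hlt'
        set c : Fin N := ⟨(B : ℕ) + d, hlt'⟩
        set k : Fin N := ⟨(B : ℕ) + d + 1, by omega⟩
        have hck : (k : ℕ) = (c : ℕ) + 1 := rfl
        have hBc : B ≤ c := by rw [Fin.le_def]; simp [c]
        have hkA : k ≤ A := by rw [Fin.le_def]; simp [k]; omega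
        have := hcon2 c k hck hBc hkA
        have hkey : (⟨(B : ℕ) + (d + 1), hlt⟩ : Fin N) = k := by ext; simp [k]; omega
        rw [hkey]
        exact le_trans h1 this
    have hdA : (B : ℕ) + ((A : ℕ) - (B : ℕ)) ≤ (A : ℕ) := by
      have := hBA; rw [Fin.lt_def] at this; omega
    have hltA : (B : ℕ) + ((A : ℕ) - (B : ℕ)) < N := by
      have := A.isLt; have := hBA; rw [Fin.lt_def] at this; omega
    have := key _ hdA hltA
    have hAeq : (⟨(B : ℕ) + ((A : ℕ) - (B : ℕ)), hltA⟩ : Fin N) = A := by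
      ext; simp
      have := hBA; rw [Fin.lt_def] at this; omega
    rw [hAeq] at this
    exact absurd (lt_of_lt_of_le hposAB this) (lt_irrefl _)
  obtain ⟨c, k, hck, hBc, hkA, hdesc⟩ := hchain
  -- w is constant on [B, A], in particular w c = w k
  have hwB : w B = w A := hw.symm
  have hwc : w c = w k := by
    have h1 : w A ≤ w k := hdec k A hkA
    have h2 : w k ≤ w c := hdec c k (by rw [Fin.le_def]; omega)
    have h3 : w c ≤ w B := hdec B c hBc
    omega
  -- the swapped permutation
  set σ' := Equiv.swap c k * σ with hσ'def
  have hv' : v = fun x => w (σ' x) := by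
    funext x
    have : w (σ' x) = w (σ x) := by
      simp only [hσ'def, Equiv.Perm.mul_apply]
      rcases eq_or_ne (σ x) c with hc | hc
      · rw [hc, Equiv.swap_apply_left]; exact hwc.symm
      · rcases eq_or_ne (σ x) k with hk2 | hk2
        · rw [hk2, Equiv.swap_apply_right]; exact hwc
        · rw [Equiv.swap_apply_of_ne_of_ne hc hk2]
    rw [this, hv]
  have hless := invNum_swap_mul_of_gt c k hck σ hdesc
  rw [← hσ'def] at hless
  have hminle := hmin σ' hv'
  rw [permLength_eq_invNum, permLength_eq_invNum] at hminle
  omega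

end Aux

/-- If `v[i] = v[i+1]` then `σ_v s_i = s_{σ_v[i]} σ_v`: the right action of the
adjacent transposition `s_i` on positions equals the left action of the
transposition of the values `σ_v[i]` and `σ_v[i] + 1`. -/
theorem sigma_mul_swap_eq_swap_values_mul {N : ℕ} (v w : Fin N → ℕ)
    (i j : Fin N) (hj : (j : ℕ) = (i : ℕ) + 1)
    (σ : Equiv.Perm (Fin N)) (hσ : IsMinDecomp v w σ) (heq : v i = v j) :
    ∃ k : Fin N, (k : ℕ) = (σ i : ℕ) + 1 ∧
      σ * Equiv.swap i j = Equiv.swap (σ i) k * σ := by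
  obtain ⟨hdec, hv, hmin⟩ := hσ
  have hij : i < j := by rw [Fin.lt_def]; omega
  have hwij : w (σ i) = w (σ j) := by
    have h1 : v i = w (σ i) := by rw [hv]
    have h2 : v j = w (σ j) := by rw [hv]
    omega
  have hlt : σ i < σ j := min_no_descent_on_equal ⟨hdec, hv, hmin⟩ i j hij hwij
  -- claim σ j = σ i + 1
  have hσj : (σ j : ℕ) = (σ i : ℕ) + 1 := by
    by_contra hcon
    have hgt1 : (σ i : ℕ) + 1 < (σ j : ℕ) := by
      rw [Fin.lt_def] at hlt; omega
    have hmlt : (σ i : ℕ) + 1 < N := lt_trans hgt1 (σ j).isLt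
    set m : Fin N := ⟨(σ i : ℕ) + 1, hmlt⟩ with hm
    have hmval : (m : ℕ) = (σ i : ℕ) + 1 := rfl
    have hwm : w m = w (σ i) := by
      have h1 : w (σ j) ≤ w m := hdec m (σ j) (by rw [Fin.le_def]; omega)
      have h2 : w m ≤ w (σ i) := hdec (σ i) m (by rw [Fin.le_def]; omega)
      omega
    set p := σ⁻¹ m with hp
    have hσp : σ p = m := by simp [hp]
    have hpi : p ≠ i := by
      intro hc
      rw [hc] at hσp
      have := congrArg Fin.val hσp
      omega
    have hpj : p ≠ j := by
      intro hc
      rw [hc] at hσp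
      have := congrArg Fin.val hσp
      omega
    rcases lt_or_gt_of_ne hpi with hplt | hpgt
    · -- p < i : pair (p, i) is a descent on equal w-values
      have := min_no_descent_on_equal ⟨hdec, hv, hmin⟩ p i hplt
        (by rw [hσp, hwm])
      rw [hσp] at this
      rw [Fin.lt_def] at this
      omega
    · -- p > i, p ≠ j, j = i + 1 so p > j
      have hpgtj : j < p := by
        rcases lt_or_gt_of_ne hpj with h | h
        · exfalso
          rw [Fin.lt_def] at h
          have hpgt' : (i : ℕ) < (p : ℕ) := Fin.lt_def.mp hpgt
          omega
        · exact h
      have := min_no_descent_on_equal ⟨hdec, hv, hmin⟩ j p hpgtj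
        (by rw [hσp, hwm, hwij])
      rw [hσp] at this
      rw [Fin.lt_def] at this
      omega
  refine ⟨σ j, hσj, ?_⟩
  exact Equiv.mul_swap_eq_swap_mul σ i j
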